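/- For an arithmetic sequence (u_n), increasing indices (k_i) with ∑ 1/k_i < ∞, and x ∈ 𝕋 with canonical support {k_i + 1 : i ∈ ℕ}, the series ∑_{n=1}^∞ (1/n)·|sin(π u_n x)| converges. In particular x lies in the N-set {y : ∑ (1/n)|sin(u_n π y)| < ∞}. -/

import Mathlib

open Finset Real

private lemma abs_cos_nat_mul_pi (N : ℕ) : |Real.cos (N * Real.pi)| = 1 := by
  induction N with
  | zero => simp
  | succ n ih =>
    have h : ((n + 1 : ℕ) : ℝ) * Real.pi = n * Real.pi + Real.pi := by push_cast; ring
    rw [h, Real.cos_add_pi, abs_neg, ih]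

private lemma abs_sin_nat_mul_pi_add (N : ℕ) (y : ℝ) :
    |Real.sin (N * Real.pi + y)| = |Real.sin y| := by
  rw [Real.sin_add, Real.sin_nat_mul_pi, zero_mul, zero_add, abs_mul,
    abs_cos_nat_mul_pi, one_mul]

private lemma geo_block (a b : ℕ) :
    ∑ n ∈ Finset.Ioc a b, ((1 : ℝ) / 2) ^ (b - n) ≤ 2 := by
  induction b with
  | zero => simp
  | succ b ih =>
    rcases le_or_gt (b + 1) a with h | h
    · rw [Finset.Ioc_eq_empty (by omega)]; norm_num
    · have hab : a ≤ b := by omega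
      rw [Finset.sum_Ioc_succ_top hab]
      have h1 : ∑ n ∈ Finset.Ioc a b, ((1 : ℝ) / 2) ^ (b + 1 - n)
          = (1 / 2) * ∑ n ∈ Finset.Ioc a b, ((1 : ℝ) / 2) ^ (b - n) := by
        rw [Finset.mul_sum]
        refine Finset.sum_congr rfl fun n hn => ?_
        have hnb : n ≤ b := (Finset.mem_Ioc.1 hn).2
        have he : b + 1 - n = (b - n) + 1 := by omega
        rw [he, pow_succ]; ring
      rw [h1]
      have h2 : (1 / 2 : ℝ) * ∑ n ∈ Finset.Ioc a b, ((1 : ℝ) / 2) ^ (b - n) ≤ 1 := by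
        nlinarith [ih]
      simp only [Nat.sub_self, pow_zero]
      linarith

/-- For an arithmetic sequence `u` (`u 0 = 1`, strictly increasing,
`u n ∣ u (n+1)`, ratios `q n = u n / u (n-1)`), strictly increasing indices
`(k i)` with `∑ 1 / k i < ∞`, and `x ∈ 𝕋` with canonical digits supported on
`{k i + 1 : i ∈ ℕ}`, the series `∑_{n ≥ 1} (1/n) |sin (π u n x)|` converges;
in particular `x` lies in the `N`-set `{y : ∑ (1/n)|sin (u n π y)| < ∞}`. -/
theorem summable_inv_mul_sin_of_sparse_support
    (u : ℕ → ℕ) (hu0 : u 0 = 1) (humono : StrictMono u)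
    (hudvd : ∀ n, u n ∣ u (n + 1))
    (k : ℕ → ℕ) (hkmono : StrictMono k) (hk1 : ∀ i, 1 ≤ k i)
    (hksum : Summable (fun i : ℕ => (1 : ℝ) / k i))
    (c : ℕ → ℕ)
    (hcsupp : ∀ n, c n ≠ 0 → ∃ i, n = k i + 1)
    (hcdigit : ∀ n, 1 ≤ n → c n < u n / u (n - 1))
    (x : ℝ) (hx : x = ∑' n : ℕ, (c n : ℝ) / u n) :
    Summable (fun n : ℕ => (1 : ℝ) / n * |Real.sin (Real.pi * u n * x)|) := by
  -- basic facts about u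
  have hupos : ∀ n, 0 < u n := fun n => by
    have := humono.monotone (Nat.zero_le n); omega
  have hupR : ∀ n, (0 : ℝ) < u n := fun n => by exact_mod_cast hupos n
  have hdouble : ∀ m, 2 * u m ≤ u (m + 1) := by
    intro m
    obtain ⟨q, hq⟩ := hudvd m
    have h1 : u m < u (m + 1) := humono (Nat.lt_succ_self m)
    have hq2 : 2 ≤ q := by nlinarith [hupos m]
    calc 2 * u m ≤ u m * q := by nlinarith [hupos m]
    _ = u (m + 1) := hq.symm
  have hdvd_le : ∀ m n, m ≤ n → u m ∣ u n := by
    intro m n h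
    induction n, h using Nat.le_induction with
    | base => rfl
    | succ n hn ih => exact ih.trans (hudvd n)
  have hpow : ∀ a b, u a * 2 ^ b ≤ u (a + b) := by
    intro a b
    induction b with
    | zero => simp
    | succ b ih =>
      calc u a * 2 ^ (b + 1) = 2 * (u a * 2 ^ b) := by ring
      _ ≤ 2 * u (a + b) := by omega
      _ ≤ u (a + b + 1) := hdouble _
  have hpow0 : ∀ b, (2 : ℕ) ^ b ≤ u b := by
    intro b; have := hpow 0 b; rw [hu0, one_mul] at this; simpa using this
  -- digits
  have hc0 : c 0 = 0 := by
    by_contra h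
    obtain ⟨i, hi⟩ := hcsupp 0 h
    omega
  set g : ℕ → ℝ := fun m => (c m : ℝ) / u m with hg_def
  have hgnonneg : ∀ m, 0 ≤ g m := fun m =>
    div_nonneg (Nat.cast_nonneg _) (Nat.cast_nonneg _)
  -- telescoping bound on digits
  have hgtel : ∀ m, 1 ≤ m → g m ≤ 1 / (u (m - 1) : ℝ) - 1 / u m := by
    intro m hm
    have hdvd : u (m - 1) ∣ u m := hdvd_le _ _ (Nat.sub_le m 1)
    have hq := hcdigit m hm
    have hcast : ((u m / u (m - 1) : ℕ) : ℝ) = (u m : ℝ) / u (m - 1) :=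
      Nat.cast_div hdvd (ne_of_gt (hupR _))
    have hcle : (c m : ℝ) ≤ (u m : ℝ) / u (m - 1) - 1 := by
      have h1 : (c m : ℝ) + 1 ≤ ((u m / u (m - 1) : ℕ) : ℝ) := by
        exact_mod_cast Nat.succ_le_of_lt hq
      rw [hcast] at h1; linarith
    have h2 : g m ≤ ((u m : ℝ) / u (m - 1) - 1) / u m := by
      show (c m : ℝ) / u m ≤ _
      exact (div_le_div_iff_of_pos_right (hupR m)).2 hcle
    have h3 : ((u m : ℝ) / u (m - 1) - 1) / u m = 1 / (u (m - 1) : ℝ) - 1 / u m := by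
      have h1 : (u m : ℝ) ≠ 0 := ne_of_gt (hupR m)
      have h2 : (u (m - 1) : ℝ) ≠ 0 := ne_of_gt (hupR (m - 1))
      field_simp
    rw [h3] at h2; exact h2
  have hinv_pow : ∀ m, 1 / (u m : ℝ) ≤ ((1 : ℝ) / 2) ^ m := by
    intro m
    have h1 : ((2 : ℝ)) ^ m ≤ u m := by exact_mod_cast hpow0 m
    rw [one_div_pow]
    exact one_div_le_one_div_of_le (pow_pos two_pos m) h1
  have hg_geom : ∀ m, g m ≤ 2 * ((1 : ℝ) / 2) ^ m := by
    intro m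
    rcases Nat.eq_zero_or_pos m with rfl | hm
    · simp [hg_def, hc0]
    · calc g m ≤ 1 / (u (m - 1) : ℝ) - 1 / u m := hgtel m hm
      _ ≤ 1 / (u (m - 1) : ℝ) := by
          have := (hupR m); have : (0:ℝ) ≤ 1 / u m := by positivity
          linarith
      _ ≤ ((1 : ℝ) / 2) ^ (m - 1) := hinv_pow (m - 1)
      _ = 2 * ((1 : ℝ) / 2) ^ m := by
          have hm1 : m = (m - 1) + 1 := by omega
          have hpw : ((1 : ℝ) / 2) ^ m = ((1:ℝ)/2) ^ (m - 1) * (1 / 2) := by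
            conv_lhs => rw [hm1, pow_succ]
          rw [hpw]; ring
  have hgeo_summable : Summable (fun m : ℕ => 2 * ((1 : ℝ) / 2) ^ m) :=
    (summable_geometric_of_lt_one (by norm_num) (by norm_num)).mul_left 2
  have hg : Summable g := Summable.of_nonneg_of_le hgnonneg hg_geom hgeo_summable
  -- the index K n = least k i with n ≤ k i
  have hex : ∀ n : ℕ, ∃ i, n ≤ k i := fun n => ⟨n, hkmono.le_apply⟩
  set K : ℕ → ℕ := fun n => k (Nat.find (hex n)) with hK_def
  have hKn : ∀ n, n ≤ K n := fun n => Nat.find_spec (hex n)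
  have hKmin : ∀ n j, n ≤ k j → K n ≤ k j := fun n j h =>
    hkmono.monotone (Nat.find_min' (hex n) h)
  -- tails
  set T : ℕ → ℝ := fun n => ∑' m, if n < m then g m else 0 with hT_def
  have hTsummand : ∀ n, Summable (fun m => if n < m then g m else 0) := by
    intro n
    refine Summable.of_nonneg_of_le (fun m => ?_) (fun m => ?_) hg
    · split <;> simp [hgnonneg]
    · split
      · exact le_rfl
      · exact hgnonneg m
  have hTnonneg : ∀ n, 0 ≤ T n := by
    intro n
    refine tsum_nonneg fun m => ?_
    split <;> simp [hgnonneg]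
  -- split of x
  have hsplit : ∀ n, x = (∑ m ∈ Finset.range (n + 1), g m) + T n := by
    intro n
    have h1 := Summable.sum_add_tsum_compl (s := Finset.range (n + 1)) hg
    have h2 : ∑' (m : ↑((↑(Finset.range (n + 1)) : Set ℕ)ᶜ)), g ↑m = T n := by
      rw [_root_.tsum_subtype]
      refine tsum_congr fun m => ?_
      by_cases h : n < m
      · rw [Set.indicator_of_mem, if_pos h]
        simp [Finset.mem_coe, Finset.mem_range]; omega
      · rw [Set.indicator_of_notMem, if_neg h]
        simp [Finset.mem_coe, Finset.mem_range]; omega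
    rw [hx, ← h1, h2]
  -- tail estimate
  have hTle : ∀ n, T n ≤ 1 / (u (K n) : ℝ) := by
    intro n
    set d : ℕ → ℝ := fun m => if K n < m then 1 / (u (m - 1) : ℝ) - 1 / u m else 0
      with hd_def
    have hdnonneg : ∀ m, 0 ≤ d m := by
      intro m
      simp only [hd_def]
      split
      · have h1 : u (m - 1) ≤ u m := humono.monotone (Nat.sub_le m 1)
        have h2 : (u (m - 1) : ℝ) ≤ u m := by exact_mod_cast h1
        have := hupR (m - 1); have := hupR m
        rw [sub_nonneg]
        exact one_div_le_one_div_of_le (hupR (m - 1)) h2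
      · exact le_rfl
    have hdgeom : ∀ m, d m ≤ 2 * ((1 : ℝ) / 2) ^ m := by
      intro m
      simp only [hd_def]
      split
      · rename_i hm
        have hm1 : 1 ≤ m := by omega
        have h1 : (0:ℝ) ≤ 1 / u m := by positivity
        calc 1 / (u (m - 1) : ℝ) - 1 / u m ≤ 1 / (u (m - 1) : ℝ) := by linarith
        _ ≤ ((1 : ℝ) / 2) ^ (m - 1) := hinv_pow (m - 1)
        _ = 2 * ((1 : ℝ) / 2) ^ m := by
            have hme : m = (m - 1) + 1 := by omega
            have hpw : ((1 : ℝ) / 2) ^ m = ((1:ℝ)/2) ^ (m - 1) * (1 / 2) := by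
              conv_lhs => rw [hme, pow_succ]
            rw [hpw]; ring
      · positivity
    have hd : Summable d := Summable.of_nonneg_of_le hdnonneg hdgeom hgeo_summable
    have hle : ∀ m, (if n < m then g m else 0) ≤ d m := by
      intro m
      simp only [hd_def]
      by_cases h : n < m
      · rw [if_pos h]
        by_cases hc : c m = 0
        · have : g m = 0 := by simp [hg_def, hc]
          rw [this]; exact hdnonneg m
        · obtain ⟨j, hj⟩ := hcsupp m hc
          have hkj : n ≤ k j := by omega
          have hKj : K n ≤ k j := hKmin n j hkj
          have hKm : K n < m := by omega
          rw [if_pos hKm]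
          exact hgtel m (by omega)
      · rw [if_neg h]; exact hdnonneg m
    have htsum_d : ∑' m, d m ≤ 1 / (u (K n) : ℝ) := by
      refine Summable.tsum_le_of_sum_le hd fun s => ?_
      obtain ⟨M, hM⟩ := s.exists_nat_subset_range
      have hsub : ∑ m ∈ s, d m ≤ ∑ m ∈ Finset.range M, d m :=
        Finset.sum_le_sum_of_subset_of_nonneg hM fun m _ _ => hdnonneg m
      refine hsub.trans ?_
      -- telescoping bound with strengthened induction
      have tele : ∀ M : ℕ, ∑ m ∈ Finset.range M, d m
          ≤ 1 / (u (K n) : ℝ) - 1 / u (max (K n) (M - 1)) := by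
        intro M
        induction M with
        | zero => simp
        | succ M ih =>
          rw [Finset.sum_range_succ]
          by_cases h : K n < M
          · have hmax1 : max (K n) (M - 1) = M - 1 := by omega
            have hmax2 : max (K n) M = M := by omega
            have hMs : M + 1 - 1 = M := by omega
            rw [hMs, hmax2]
            have hd_M : d M = 1 / (u (M - 1) : ℝ) - 1 / u M := by
              simp only [hd_def]; rw [if_pos h]
            rw [hd_M]
            rw [hmax1] at ih
            linarith [ih]
          · have hd_M : d M = 0 := by simp only [hd_def]; rw [if_neg h]
            have hmax1 : max (K n) (M - 1) = K n := by omega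
            have hmax2 : max (K n) (M + 1 - 1) = K n := by omega
            rw [hd_M, hmax2]
            rw [hmax1] at ih
            linarith [ih]
      refine (tele M).trans ?_
      have : (0:ℝ) ≤ 1 / u (max (K n) (M - 1)) := by positivity
      linarith
    calc T n ≤ ∑' m, d m := Summable.tsum_le_tsum hle (hTsummand n) hd
    _ ≤ 1 / (u (K n) : ℝ) := htsum_d
  -- sine estimate
  have hsin : ∀ n, |Real.sin (Real.pi * u n * x)| ≤ Real.pi * ((u n : ℝ) * T n) := by
    intro n
    set N : ℕ := ∑ m ∈ Finset.range (n + 1), c m * (u n / u m) with hN_def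
    have hNA : (u n : ℝ) * (∑ m ∈ Finset.range (n + 1), g m) = N := by
      rw [Finset.mul_sum, hN_def]
      push_cast
      refine Finset.sum_congr rfl fun m hm => ?_
      have hmn : m ≤ n := by
        have := Finset.mem_range.1 hm; omega
      have hdvd : u m ∣ u n := hdvd_le _ _ hmn
      rw [Nat.cast_div hdvd (ne_of_gt (hupR m))]
      simp only [hg_def]
      field_simp
    have key : Real.pi * u n * x = (N : ℝ) * Real.pi + Real.pi * ((u n : ℝ) * T n) := by
      rw [hsplit n, ← hNA]; ring
    rw [key, abs_sin_nat_mul_pi_add]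
    refine (Real.abs_sin_le_abs).trans ?_
    exact (abs_of_nonneg (mul_nonneg Real.pi_pos.le
      (mul_nonneg (hupR n).le (hTnonneg n)))).le
  -- the dominating function
  set F : ℕ → ℝ := fun n =>
    if n = 0 then 0 else Real.pi * (1 / (n : ℝ)) * ((1 : ℝ) / 2) ^ (K n - n)
    with hF_def
  have hFnonneg : ∀ n, 0 ≤ F n := by
    intro n
    simp only [hF_def]
    split
    · exact le_rfl
    · positivity
  have hfF : ∀ n, (1 : ℝ) / n * |Real.sin (Real.pi * u n * x)| ≤ F n := by
    intro n
    rcases Nat.eq_zero_or_pos n with rfl | hn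
    · simp [hF_def]
    · have hF_eq : F n = Real.pi * (1 / (n : ℝ)) * ((1 : ℝ) / 2) ^ (K n - n) := by
        simp only [hF_def]; rw [if_neg (by omega)]
      rw [hF_eq]
      have step1 : |Real.sin (Real.pi * u n * x)| ≤ Real.pi * ((1 : ℝ) / 2) ^ (K n - n) := by
        refine (hsin n).trans ?_
        have h1 : (u n : ℝ) * T n ≤ (u n : ℝ) * (1 / u (K n)) := by
          have := hTle n
          have hun : (0:ℝ) ≤ u n := (hupR n).le
          nlinarith [hTle n, hupR n]
        have h2 : (u n : ℝ) * (1 / u (K n)) ≤ ((1 : ℝ) / 2) ^ (K n - n) := by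
          have hp := hpow n (K n - n)
          have hadd : n + (K n - n) = K n := by have := hKn n; omega
          rw [hadd] at hp
          have hpR : (u n : ℝ) * 2 ^ (K n - n) ≤ u (K n) := by exact_mod_cast hp
          rw [one_div_pow]
          rw [mul_one_div, div_le_div_iff₀ (hupR (K n)) (by positivity)]
          calc (u n : ℝ) * 2 ^ (K n - n) ≤ u (K n) := hpR
          _ = 1 * u (K n) := (one_mul _).symm
        calc Real.pi * ((u n : ℝ) * T n) ≤ Real.pi * ((u n : ℝ) * (1 / u (K n))) := by
              nlinarith [Real.pi_pos, h1]
        _ ≤ Real.pi * ((1 : ℝ) / 2) ^ (K n - n) := by nlinarith [Real.pi_pos, h2]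
      have hn_inv : (0:ℝ) ≤ 1 / (n : ℝ) := by positivity
      calc (1 : ℝ) / n * |Real.sin (Real.pi * u n * x)|
          ≤ (1 : ℝ) / n * (Real.pi * ((1 : ℝ) / 2) ^ (K n - n)) := by
            exact mul_le_mul_of_nonneg_left step1 hn_inv
      _ = Real.pi * (1 / (n : ℝ)) * ((1 : ℝ) / 2) ^ (K n - n) := by ring
  -- value of K on blocks
  have hKblock : ∀ i n, k i < n → n ≤ k (i + 1) → K n = k (i + 1) := by
    intro i n h1 h2
    have hle : Nat.find (hex n) ≤ i + 1 := Nat.find_le h2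
    have hgt : i < Nat.find (hex n) := by
      by_contra h
      push_neg at h
      have : K n ≤ k i := hkmono.monotone h
      have := hKn n
      omega
    have : Nat.find (hex n) = i + 1 := by omega
    simp only [hK_def, this]
  -- block sums
  have hblock : ∀ i, ∑ n ∈ Finset.Ioc (k i) (k (i + 1)), F n
      ≤ 2 * Real.pi * (1 / (k i : ℝ)) := by
    intro i
    have hkipos : (0:ℝ) < k i := by exact_mod_cast hk1 i
    have step : ∀ n ∈ Finset.Ioc (k i) (k (i + 1)),
        F n ≤ Real.pi * (1 / (k i : ℝ)) * ((1 : ℝ) / 2) ^ (k (i + 1) - n) := by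
      intro n hn
      obtain ⟨h1, h2⟩ := Finset.mem_Ioc.1 hn
      have hn0 : n ≠ 0 := by have := hk1 i; omega
      have hK_eq : K n = k (i + 1) := hKblock i n h1 h2
      have hF_eq : F n = Real.pi * (1 / (n : ℝ)) * ((1 : ℝ) / 2) ^ (k (i + 1) - n) := by
        simp only [hF_def]; rw [if_neg hn0, hK_eq]
      rw [hF_eq]
      have hnn : (k i : ℝ) ≤ n := by exact_mod_cast h1.le
      have hinv : (1 : ℝ) / n ≤ 1 / k i :=
        one_div_le_one_div_of_le hkipos hnn
      have hpw : (0:ℝ) ≤ ((1 : ℝ) / 2) ^ (k (i + 1) - n) := by positivity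
      exact mul_le_mul_of_nonneg_right
        (mul_le_mul_of_nonneg_left hinv Real.pi_pos.le) hpw
    calc ∑ n ∈ Finset.Ioc (k i) (k (i + 1)), F n
        ≤ ∑ n ∈ Finset.Ioc (k i) (k (i + 1)),
            Real.pi * (1 / (k i : ℝ)) * ((1 : ℝ) / 2) ^ (k (i + 1) - n) :=
          Finset.sum_le_sum step
    _ = Real.pi * (1 / (k i : ℝ)) *
          ∑ n ∈ Finset.Ioc (k i) (k (i + 1)), ((1 : ℝ) / 2) ^ (k (i + 1) - n) := by
          rw [Finset.mul_sum]
    _ ≤ Real.pi * (1 / (k i : ℝ)) * 2 := by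
          have := geo_block (k i) (k (i + 1))
          have hnn : (0:ℝ) ≤ Real.pi * (1 / (k i : ℝ)) := by positivity
          nlinarith
    _ = 2 * Real.pi * (1 / (k i : ℝ)) := by ring
  -- partial sums of F are bounded
  set C0 : ℝ := ∑ n ∈ Finset.range (k 0 + 1), F n with hC0_def
  have hpartial : ∀ i, ∑ n ∈ Finset.range (k i + 1), F n
      ≤ C0 + 2 * Real.pi * ∑ j ∈ Finset.range i, (1 : ℝ) / k j := by
    intro i
    induction i with
    | zero => simp [hC0_def]
    | succ i ih =>
      have hki : k i + 1 ≤ k (i + 1) + 1 := by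
        have := hkmono (show i < i + 1 by omega); omega
      have hsplit2 : ∑ n ∈ Finset.range (k (i + 1) + 1), F n
          = ∑ n ∈ Finset.range (k i + 1), F n
            + ∑ n ∈ Finset.Ioc (k i) (k (i + 1)), F n := by
        rw [Finset.range_eq_Ico,
          ← Finset.sum_Ico_consecutive F (Nat.zero_le (k i + 1)) hki]
        have hIco : Finset.Ico (k i + 1) (k (i + 1) + 1)
            = Finset.Ioc (k i) (k (i + 1)) := by
          ext a
          simp only [Finset.mem_Ico, Finset.mem_Ioc]
          omega
        rw [hIco, Finset.range_eq_Ico]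
      rw [hsplit2]
      have hrs : ∑ j ∈ Finset.range (i + 1), (1 : ℝ) / k j
          = ∑ j ∈ Finset.range i, (1 : ℝ) / k j + 1 / k i :=
        Finset.sum_range_succ _ i
      rw [hrs, mul_add]
      have := hblock i
      linarith
  have hbound : ∀ N, ∑ n ∈ Finset.range N, F n
      ≤ C0 + 2 * Real.pi * ∑' j, (1 : ℝ) / k j := by
    intro N
    have hNk : N ≤ k N + 1 := by have := hkmono.le_apply (x := N); omega
    have h1 : ∑ n ∈ Finset.range N, F n ≤ ∑ n ∈ Finset.range (k N + 1), F n :=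
      Finset.sum_le_sum_of_subset_of_nonneg
        (Finset.range_subset_range.2 hNk) fun m _ _ => hFnonneg m
    have h2 := hpartial N
    have h3 : ∑ j ∈ Finset.range N, (1 : ℝ) / k j ≤ ∑' j, (1 : ℝ) / k j :=
      Summable.sum_le_tsum (Finset.range N)
        (fun j _ => by positivity) hksum
    have hpi : (0:ℝ) ≤ 2 * Real.pi := by positivity
    nlinarith
  have hF : Summable F := summable_of_sum_range_le hFnonneg hbound
  exact Summable.of_nonneg_of_le
    (fun n => mul_nonneg (by positivity) (abs_nonneg _)) hfF hF
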